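/- Every countable Hausdorff Boolean topological group G has a basis E (a linearly independent subset generating G) such that E is discrete in the subspace topology and the closure of E is contained in E ∪ {0}. Consequently, G has either a closed discrete basis or a discrete basis whose unique limit point is the zero element 0. -/

import Mathlib

open Set Function

namespace Stmt14Aux

variable {G : Type*} [AddCommGroup G] [TopologicalSpace G] [IsTopologicalAddGroup G] [T2Space G]

/-- Linear independence of a finite set in a Boolean group. -/
def Ind (E : Finset G) : Prop := ∀ t : Finset G, t ⊆ E → t.Nonempty → ∑ x ∈ t, x ≠ 0

theorem neg_self (hbool : ∀ g : G, g + g = 0) (g : G) : -g = g :=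
  neg_eq_of_add_eq_zero_right (hbool g)

theorem ind_insert [DecidableEq G] (hbool : ∀ g : G, g + g = 0) {E : Finset G} (hE : Ind E) {v : G}
    (hv : v ∉ AddSubgroup.closure (E : Set G)) : Ind (insert v E) := by
  classical
  intro t ht hne hsum
  by_cases hvt : v ∈ t
  · have hre : v + ∑ x ∈ t.erase v, x = ∑ x ∈ t, x := Finset.add_sum_erase t id hvt
    have hveq : v = ∑ x ∈ t.erase v, x := by
      have := congrArg (fun z => v + z) (hre.trans hsum)
      simpa [← add_assoc, hbool v] using this.symm
    have hsub : (↑(t.erase v) : Set G) ⊆ (E : Set G) := by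
      intro z hz
      simp only [Finset.coe_erase, Set.mem_diff, Set.mem_singleton_iff] at hz
      have := ht hz.1
      simp only [Finset.mem_insert] at this
      rcases this with h | h
      · exact absurd h hz.2
      · exact h
    exact hv (hveq ▸ AddSubgroup.sum_mem _ fun i hi => AddSubgroup.subset_closure (hsub hi))
  · have : t ⊆ E := by
      intro z hz
      rcases Finset.mem_insert.mp (ht hz) with h | h
      · exact absurd (h ▸ hz) hvt
      · exact h
    exact hE t this hne hsum

theorem extend_list [DecidableEq G] (hbool : ∀ g : G, g + g = 0) (S : Set G) (l : List G) :
    ∀ E : Finset G, Ind E → (∀ y ∈ l, y ∈ S) →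
    ∃ E' : Finset G, E ⊆ E' ∧ Ind E' ∧ (↑E' : Set G) ⊆ ↑E ∪ S ∧
      ∀ y ∈ l, y ∈ AddSubgroup.closure (E' : Set G) := by
  classical
  induction l with
  | nil => exact fun E hE _ => ⟨E, subset_rfl, hE, by simp, by simp⟩
  | cons y l ih =>
    intro E hE hl
    by_cases hy : y ∈ AddSubgroup.closure (E : Set G)
    · obtain ⟨E', h1, h2, h3, h4⟩ := ih E hE (fun z hz => hl z (List.mem_cons_of_mem _ hz))
      refine ⟨E', h1, h2, h3, ?_⟩
      intro z hz
      rcases List.mem_cons.mp hz with rfl | hz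
      · exact AddSubgroup.closure_mono (by exact_mod_cast h1) hy
      · exact h4 z hz
    · have hE2 : Ind (insert y E) := ind_insert hbool hE hy
      obtain ⟨E', h1, h2, h3, h4⟩ := ih (insert y E) hE2
        (fun z hz => hl z (List.mem_cons_of_mem _ hz))
      refine ⟨E', (Finset.subset_insert _ _).trans h1, h2, ?_, ?_⟩
      · intro z hz
        rcases h3 hz with h | h
        · rcases Finset.mem_coe.mp h |> Finset.mem_insert.mp with rfl | h
          · exact Or.inr (hl z List.mem_cons_self)
          · exact Or.inl h
        · exact Or.inr h
      · intro z hz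
        rcases List.mem_cons.mp hz with rfl | hz
        · exact AddSubgroup.subset_closure (by exact_mod_cast h1 (Finset.mem_insert_self _ _))
        · exact h4 z hz

theorem exists_list_sum (hbool : ∀ g : G, g + g = 0) {S : Set G} {x : G}
    (hx : x ∈ AddSubgroup.closure S) : ∃ l : List G, (∀ y ∈ l, y ∈ S) ∧ l.sum = x := by
  induction hx using AddSubgroup.closure_induction with
  | mem z hz => exact ⟨[z], by simpa using hz, by simp⟩
  | zero => exact ⟨[], by simp, by simp⟩
  | add a b _ _ ha hb =>
    obtain ⟨l1, h1, h1s⟩ := ha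
    obtain ⟨l2, h2, h2s⟩ := hb
    refine ⟨l1 ++ l2, ?_, by simp [h1s, h2s]⟩
    intro y hy
    rcases List.mem_append.mp hy with h | h
    · exact h1 y h
    · exact h2 y h
  | neg a _ ha =>
    obtain ⟨l, h1, h1s⟩ := ha
    exact ⟨l, h1, by rw [h1s, neg_self hbool]⟩

/-- The invariant carried through the recursion. -/
def Inv (E : Finset G) (K : Set G) : Prop :=
  IsClosed K ∧ (0 : G) ∉ K ∧ Ind E ∧
    AddSubgroup.closure (E : Set G) ⊔ AddSubgroup.closure Kᶜ = ⊤

/-- Specification of one step of the construction. -/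
def Spec (x : G) (E : Finset G) (K : Set G) (q : Finset G × Set G × Set G) : Prop :=
  E ⊆ q.1 ∧ K ⊆ q.2.1 ∧ Inv q.1 q.2.1 ∧
    x ∈ AddSubgroup.closure (q.1 : Set G) ∧
    (↑q.1 : Set G) \ ↑E ⊆ Kᶜ ∧
    IsOpen q.2.2 ∧ x ∈ q.2.2 ∧ q.2.2 ∩ ↑q.1 ⊆ {x} ∧ q.2.2 ⊆ q.2.1

theorem key (hbool : ∀ g : G, g + g = 0) {E : Finset G} {K : Set G}
    (hI : Inv E K) {x : G} (hx : x ≠ 0) : ∃ q, Spec x E K q := by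
  classical
  obtain ⟨hKc, hK0, hE, hgen⟩ := hI
  -- Step 1: spanning step, put `x` into the span of an enlarged independent set
  have hxmem : x ∈ AddSubgroup.closure ((E : Set G) ∪ Kᶜ) := by
    rw [AddSubgroup.closure_union, hgen]; trivial
  obtain ⟨l, hl, hsum⟩ := exists_list_sum hbool hxmem
  obtain ⟨E', hEE', hE', hsub, hmem⟩ := extend_list hbool _ l E hE hl
  have hxE' : x ∈ AddSubgroup.closure (E' : Set G) := by
    rw [← hsum]; exact list_sum_mem fun y hy => hmem y hy
  have hnew : (↑E' : Set G) \ ↑E ⊆ Kᶜ := by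
    intro z hz
    rcases hsub hz.1 with h | h | h
    · exact absurd h hz.2
    · exact absurd h hz.2
    · exact h
  -- Step 2: choose a small open neighborhood `W` of `0`
  have hxC : ({x}ᶜ : Set G) ∈ nhds (0 : G) :=
    isOpen_compl_singleton.mem_nhds (by simp [Ne.symm hx])
  obtain ⟨C, hCn, hCc, hCs⟩ := exists_mem_nhds_isClosed_subset hxC
  have hxnotC : x ∉ C := fun h => hCs h rfl
  obtain ⟨V1, hV1o, hV1z, hV1⟩ := exists_open_nhds_zero_half hCn
  obtain ⟨V2, hV2o, hV2z, hV2⟩ := exists_open_nhds_zero_half (hV1o.mem_nhds hV1z)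
  have hV1C : V1 ⊆ C := fun v hv => by simpa using hV1 v hv 0 hV1z
  have hV21 : V2 ⊆ V1 := fun v hv => by simpa using hV2 v hv 0 hV2z
  set xD : Set G := (fun d => x + d) '' ↑(E'.erase x) with hxDdef
  have hxDclosed : IsClosed xD := (((E'.erase x).finite_toSet).image _).isClosed
  have h0xD : (0 : G) ∉ xD := by
    rintro ⟨d, hd, h0⟩
    have : d = x := by
      have := congrArg (fun z => x + z) h0
      simpa [← add_assoc, hbool x] using this
    rw [this] at hd
    exact (Finset.notMem_erase x E') (by exact_mod_cast hd)
  set W : Set G := V2 ∩ Kᶜ ∩ xDᶜ with hWdef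
  have hWo : IsOpen W := ((hV2o.inter hKc.isOpen_compl).inter hxDclosed.isOpen_compl)
  have hWz : (0 : G) ∈ W := ⟨⟨hV2z, hK0⟩, h0xD⟩
  have hWV2 : W ⊆ V2 := fun w hw => hw.1.1
  have hWK : W ⊆ Kᶜ := fun w hw => hw.1.2
  have hWxD : W ⊆ xDᶜ := fun w hw => hw.2
  have hpair : ∀ a ∈ W, ∀ b ∈ W, a + b ∈ C := fun a ha b hb =>
    hV1C (hV2 a (hWV2 ha) b (hWV2 hb))
  have htriple : ∀ a ∈ W, ∀ b ∈ W, ∀ c ∈ W, a + b + c ∈ C := fun a ha b hb c hc =>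
    hV1 _ (hV2 a (hWV2 ha) b (hWV2 hb)) _ (hV21 (hWV2 hc))
  -- Step 3: the neighborhood `U` of `x`
  set U : Set G := (fun w => x + w) '' W with hUdef
  have hUo : IsOpen U := isOpenMap_add_left x W hWo
  have hxU : x ∈ U := ⟨0, hWz, add_zero x⟩
  have hclU : closure U = (fun w => x + w) '' closure W := by
    have h := (Homeomorph.addLeft x).image_closure W
    simp only [Homeomorph.coe_addLeft] at h
    exact h.symm
  have hclW : ∀ c ∈ closure W, ∃ a ∈ W, ∃ b ∈ W, c = a + b := by
    intro c hc
    have hop : IsOpen ((fun w => c + w) '' W) := isOpenMap_add_left c W hWo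
    have hcmem : c ∈ (fun w => c + w) '' W := ⟨0, hWz, add_zero c⟩
    obtain ⟨z, hz1, hz2⟩ := mem_closure_iff.mp hc _ hop hcmem
    obtain ⟨w1, hw1, rfl⟩ := hz1
    exact ⟨c + w1, hz2, w1, hw1, by rw [add_assoc, hbool, add_zero]⟩
  have hWclU : ∀ w ∈ W, w ∉ closure U := by
    intro w hw hwcl
    rw [hclU] at hwcl
    obtain ⟨c, hc, hwc⟩ := hwcl
    obtain ⟨a, ha, b, hb, rfl⟩ := hclW c hc
    have hwc' : x + (a + b) = w := hwc
    have hxw : x = w + (a + b) := by rw [← hwc', add_assoc, hbool, add_zero]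
    exact hxnotC (by rw [hxw, ← add_assoc]; exact htriple w hw a ha b hb)
  have h0clU : (0 : G) ∉ closure U := by
    intro h0
    rw [hclU] at h0
    obtain ⟨c, hc, h0c⟩ := h0
    have : c = x := by
      have := congrArg (fun z => x + z) h0c
      simpa [← add_assoc, hbool x] using this
    rw [this] at hc
    obtain ⟨a, ha, b, hb, hxab⟩ := hclW x hc
    exact hxnotC (hxab ▸ hpair a ha b hb)
  -- Step 4: assemble
  refine ⟨(E', K ∪ closure U, U), hEE', subset_union_left, ⟨?_, ?_, hE', ?_⟩, hxE', hnew,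
    hUo, hxU, ?_, fun u hu => Or.inr (subset_closure hu)⟩
  · exact hKc.union isClosed_closure
  · rintro (h | h)
    · exact hK0 h
    · exact h0clU h
  · -- generation is preserved
    rw [eq_top_iff, ← hgen, ← AddSubgroup.closure_union, ← AddSubgroup.closure_union]
    apply AddSubgroup.closure_le _ |>.mpr
    rintro v (hv | hv)
    · exact AddSubgroup.subset_closure (Or.inl (hEE' hv))
    · by_cases hvU : v ∈ closure U
      · rw [hclU] at hvU
        obtain ⟨c, hc, hvc⟩ := hvU
        obtain ⟨a, ha, b, hb, rfl⟩ := hclW c hc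
        have hxcl : x ∈ AddSubgroup.closure ((E' : Set G) ∪ (K ∪ closure U)ᶜ) :=
          AddSubgroup.closure_mono subset_union_left hxE'
        have hW' : ∀ w ∈ W, w ∈ AddSubgroup.closure ((E' : Set G) ∪ (K ∪ closure U)ᶜ) := by
          intro w hw
          refine AddSubgroup.subset_closure (Or.inr ?_)
          rintro (h | h)
          · exact hWK hw h
          · exact hWclU w hw h
        rw [← hvc]
        exact AddSubgroup.add_mem _ hxcl (AddSubgroup.add_mem _ (hW' a ha) (hW' b hb))
      · refine AddSubgroup.subset_closure (Or.inr ?_)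
        rintro (h | h)
        · exact hv h
        · exact hvU h
  · -- U meets E' only in x
    rintro y ⟨hyU, hyE'⟩
    obtain ⟨w, hw, rfl⟩ := hyU
    by_contra hne
    simp only [mem_singleton_iff] at hne
    apply hWxD hw
    refine ⟨x + w, Finset.mem_erase.mpr ⟨hne, by exact_mod_cast hyE'⟩, ?_⟩
    show x + (x + w) = w
    rw [← add_assoc, hbool, zero_add]

open Classical in
noncomputable def step (hbool : ∀ g : G, g + g = 0) (x : G) (p : Finset G × Set G) :
    Finset G × Set G × Set G :=
  if h : Inv p.1 p.2 ∧ x ≠ 0 then Classical.choose (key hbool h.1 h.2)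
  else (p.1, p.2, ∅)

noncomputable def seq (hbool : ∀ g : G, g + g = 0) (f : ℕ → G) : ℕ → Finset G × Set G × Set G
  | 0 => (∅, ∅, ∅)
  | n + 1 => step hbool (f n) ((seq hbool f n).1, (seq hbool f n).2.1)

theorem inv_seq (hbool : ∀ g : G, g + g = 0) (f : ℕ → G) :
    ∀ n, Inv (seq hbool f n).1 (seq hbool f n).2.1 := by
  intro n
  induction n with
  | zero =>
    show Inv (∅ : Finset G) (∅ : Set G)
    refine ⟨isClosed_empty, Set.notMem_empty 0, ?_, by simp [Set.compl_empty, AddSubgroup.closure_univ]⟩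
    intro t ht hne
    rw [Finset.subset_empty.mp ht] at hne
    exact absurd hne (by simp)
  | succ n ih =>
    show Inv (step hbool (f n) _).1 (step hbool (f n) _).2.1
    by_cases hx : f n = 0
    · rw [step, dif_neg (fun h => h.2 hx)]
      exact ih
    · rw [step, dif_pos ⟨ih, hx⟩]
      exact (Classical.choose_spec (key hbool ih hx)).2.2.1

theorem seq_succ (hbool : ∀ g : G, g + g = 0) (f : ℕ → G) (n : ℕ) :
    (seq hbool f n).1 ⊆ (seq hbool f (n + 1)).1 ∧
    (seq hbool f n).2.1 ⊆ (seq hbool f (n + 1)).2.1 ∧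
    ((seq hbool f (n + 1)).1 : Set G) \ ((seq hbool f n).1 : Set G) ⊆
      ((seq hbool f n).2.1)ᶜ ∧
    (f n ≠ 0 → Spec (f n) (seq hbool f n).1 (seq hbool f n).2.1 (seq hbool f (n + 1))) := by
  have hI := inv_seq hbool f n
  show (seq hbool f n).1 ⊆ (step hbool (f n) _).1 ∧ _ ∧ _ ∧ _
  by_cases hx : f n = 0
  · rw [show seq hbool f (n+1) = step hbool (f n) ((seq hbool f n).1, (seq hbool f n).2.1)
        from rfl, step, dif_neg (fun h => h.2 hx)]
    exact ⟨subset_rfl, subset_rfl, by simp, fun h => absurd hx h⟩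
  · rw [show seq hbool f (n+1) = step hbool (f n) ((seq hbool f n).1, (seq hbool f n).2.1)
        from rfl, step, dif_pos ⟨hI, hx⟩]
    have hs := Classical.choose_spec (key hbool hI hx)
    exact ⟨hs.1, hs.2.1, hs.2.2.2.2.1, fun _ => hs⟩

theorem E_mono (hbool : ∀ g : G, g + g = 0) (f : ℕ → G) {m n : ℕ} (h : m ≤ n) :
    (seq hbool f m).1 ⊆ (seq hbool f n).1 := by
  induction n, h using Nat.le_induction with
  | base => exact subset_rfl
  | succ k hk ih => exact ih.trans (seq_succ hbool f k).1

theorem K_mono (hbool : ∀ g : G, g + g = 0) (f : ℕ → G) {m n : ℕ} (h : m ≤ n) :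
    (seq hbool f m).2.1 ⊆ (seq hbool f n).2.1 := by
  induction n, h using Nat.le_induction with
  | base => exact subset_rfl
  | succ k hk ih => exact ih.trans (seq_succ hbool f k).2.1

theorem not_in_K (hbool : ∀ g : G, g + g = 0) (f : ℕ → G) {n m : ℕ} (h : n + 1 ≤ m)
    {y : G} (hy : y ∈ (seq hbool f m).1) (hyn : y ∉ (seq hbool f (n + 1)).1) :
    y ∉ (seq hbool f (n + 1)).2.1 := by
  induction m, h using Nat.le_induction with
  | base => exact absurd hy hyn
  | succ k hk ih =>
    by_cases hyk : y ∈ (seq hbool f k).1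
    · exact ih hyk
    · intro hyK
      exact (seq_succ hbool f k).2.2.1 ⟨by exact_mod_cast hy, by exact_mod_cast hyk⟩
        (K_mono hbool f hk hyK)

theorem U_meets (hbool : ∀ g : G, g + g = 0) (f : ℕ → G) {n : ℕ} (hfn : f n ≠ 0) :
    (seq hbool f (n + 1)).2.2 ∩ (⋃ m, ((seq hbool f m).1 : Set G)) ⊆ {f n} := by
  obtain ⟨-, -, -, -, -, -, -, hUE, hUK⟩ := (seq_succ hbool f n).2.2.2 hfn
  rintro y ⟨hyU, hyE⟩
  obtain ⟨s, ⟨m, rfl⟩, hym⟩ := hyE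
  by_cases hy1 : y ∈ (seq hbool f (n + 1)).1
  · exact hUE ⟨hyU, by exact_mod_cast hy1⟩
  · have hym' : y ∈ (seq hbool f (max m (n + 1))).1 :=
      E_mono hbool f (le_max_left m (n + 1)) (by exact_mod_cast hym)
    exact absurd (hUK hyU) (not_in_K hbool f (le_max_right m (n + 1)) hym' hy1)

end Stmt14Aux

/-- Every countable Hausdorff Boolean topological group has a basis `E`
(a linearly independent generating set) that is discrete in the subspace
topology and whose closure is contained in `E ∪ {0}`: thus `G` has either a
closed discrete basis or a discrete basis whose unique limit point is `0`. -/
theorem stmt14 {G : Type*} [AddCommGroup G] [TopologicalSpace G] [IsTopologicalAddGroup G]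
    [T2Space G] [Countable G] (hbool : ∀ g : G, g + g = 0) :
    ∃ E : Set G,
      (∀ t : Finset G, ↑t ⊆ E → t.Nonempty → ∑ x ∈ t, x ≠ 0) ∧
      AddSubgroup.closure E = ⊤ ∧
      (∀ x ∈ E, ∃ U : Set G, IsOpen U ∧ U ∩ E = {x}) ∧
      closure E ⊆ E ∪ {0} := by
  classical
  open Stmt14Aux in
  haveI : Nonempty G := ⟨0⟩
  obtain ⟨f, hf⟩ := exists_surjective_nat G
  set S : Set G := ⋃ m, ((Stmt14Aux.seq hbool f m).1 : Set G) with hSdef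
  have hsubS : ∀ m, ((Stmt14Aux.seq hbool f m).1 : Set G) ⊆ S := fun m =>
    Set.subset_iUnion (fun m => ((Stmt14Aux.seq hbool f m).1 : Set G)) m
  -- any finite subset of S is contained in some stage
  have hfin : ∀ t : Finset G, ↑t ⊆ S → ∃ N, t ⊆ (Stmt14Aux.seq hbool f N).1 := by
    intro t
    induction t using Finset.induction with
    | empty => exact fun _ => ⟨0, Finset.empty_subset _⟩
    | @insert a t ha ih =>
      intro hsub
      rw [Finset.coe_insert, Set.insert_subset_iff] at hsub
      obtain ⟨N1, hN1⟩ := ih hsub.2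
      obtain ⟨s, ⟨N2, rfl⟩, haN2⟩ := hsub.1
      refine ⟨max N1 N2, Finset.insert_subset ?_ ?_⟩
      · exact Stmt14Aux.E_mono hbool f (le_max_right N1 N2) (by exact_mod_cast haN2)
      · exact hN1.trans (Stmt14Aux.E_mono hbool f (le_max_left N1 N2))
  have hind : ∀ t : Finset G, ↑t ⊆ S → t.Nonempty → ∑ x ∈ t, x ≠ 0 := by
    intro t ht hne
    obtain ⟨N, hN⟩ := hfin t ht
    exact (Stmt14Aux.inv_seq hbool f N).2.2.1 t hN hne
  have hUmeet : ∀ n : ℕ, f n ≠ 0 → (Stmt14Aux.seq hbool f (n + 1)).2.2 ∩ S ⊆ {f n} :=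
    fun n hn => Stmt14Aux.U_meets hbool f hn
  refine ⟨S, hind, ?_, ?_, ?_⟩
  · -- spanning
    rw [eq_top_iff]
    rintro g -
    obtain ⟨n, rfl⟩ := hf g
    by_cases hzero : f n = 0
    · rw [hzero]; exact zero_mem _
    · have hspec := (Stmt14Aux.seq_succ hbool f n).2.2.2 hzero
      exact AddSubgroup.closure_mono (hsubS (n + 1)) hspec.2.2.2.1
  · -- discreteness
    intro x hx
    have hxne : x ≠ 0 := by
      intro h
      exact hind {x} (by simpa using hx) ⟨x, Finset.mem_singleton_self x⟩ (by simp [h])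
    obtain ⟨n, rfl⟩ := hf x
    obtain ⟨-, -, -, -, -, hUo, hxU, -, -⟩ := (Stmt14Aux.seq_succ hbool f n).2.2.2 hxne
    refine ⟨(Stmt14Aux.seq hbool f (n + 1)).2.2, hUo, ?_⟩
    apply Set.Subset.antisymm (hUmeet n hxne)
    exact Set.singleton_subset_iff.mpr ⟨hxU, hx⟩
  · -- closure condition
    intro y hy
    by_contra hyn
    rw [Set.mem_union, not_or, Set.mem_singleton_iff] at hyn
    obtain ⟨hyS, hy0⟩ := hyn
    obtain ⟨n, rfl⟩ := hf y
    obtain ⟨-, -, -, -, -, hUo, hxU, -, -⟩ := (Stmt14Aux.seq_succ hbool f n).2.2.2 hy0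
    obtain ⟨z, hz1, hz2⟩ := mem_closure_iff.mp hy _ hUo hxU
    have : z = f n := hUmeet n hy0 ⟨hz1, hz2⟩
    exact hyS (this ▸ hz2)
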